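/- There exists a quantum probability assignment F on ℂ² of size 4 such that every subset of F of size 3 is consistent, but F itself is not consistent. Consequently the consistency number of a 2-dimensional quantum system equals 4. -/

import Mathlib

open Matrix ComplexOrder

/-- The rank-one orthogonal projection `|v⟩⟨v|` onto the line spanned by `v`. -/
def proj {n : ℕ} (v : Fin n → ℂ) : Matrix (Fin n) (Fin n) ℂ :=
  Matrix.vecMulVec v (star v)

/-- One member `⟨B_k, S_k⟩` of a quantum probability assignment on `ℂⁿ`: an
orthonormal basis `vec` of `ℂⁿ` (whose rank-one projections form the measurement)
together with a probability distribution `prob` on the `n` outcomes. -/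
structure Meas (n : ℕ) where
  vec : Fin n → (Fin n → ℂ)
  ortho : ∀ i j, dotProduct (star (vec i)) (vec j) = if i = j then 1 else 0
  prob : Fin n → ℝ
  prob_nonneg : ∀ i, 0 ≤ prob i
  prob_sum : ∑ i, prob i = 1

/-- The sub-family of the QPA `F` indexed by `G` is consistent: some density matrix
(positive semidefinite, trace one) reproduces all the assigned probabilities. -/
def ConsistentOn {n m : ℕ} (F : Fin m → Meas n) (G : Finset (Fin m)) : Prop :=
  ∃ ρ : Matrix (Fin n) (Fin n) ℂ, ρ.PosSemidef ∧ ρ.trace = 1 ∧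
    ∀ k ∈ G, ∀ i, (ρ * proj ((F k).vec i)).trace = ((F k).prob i : ℂ)

/-! ### Bloch-sphere machinery -/

noncomputable def bloch (p : Fin 3 → ℝ) : Matrix (Fin 2) (Fin 2) ℂ :=
  !![((1 + p 2)/2 : ℝ), (((p 0 : ℂ) - (p 1 : ℝ) * Complex.I)/2);
     (((p 0 : ℂ) + (p 1 : ℝ) * Complex.I)/2), ((1 - p 2)/2 : ℝ)]

noncomputable def bvec (v : Fin 2 → ℂ) : Fin 3 → ℝ :=
  ![2 * (v 0 * (starRingEnd ℂ) (v 1)).re, -2 * (v 0 * (starRingEnd ℂ) (v 1)).im,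
    Complex.normSq (v 0) - Complex.normSq (v 1)]

lemma bloch_trace (p : Fin 3 → ℝ) : (bloch p).trace = 1 := by
  simp [bloch, Matrix.trace, Fin.sum_univ_two]
  ring

lemma trace_bloch_mul (p q : Fin 3 → ℝ) :
    (bloch p * bloch q).trace = (((1 + ∑ i, p i * q i)/2 : ℝ) : ℂ) := by
  simp [bloch, Matrix.trace, Matrix.mul_apply, Fin.sum_univ_two, Fin.sum_univ_three]
  ring_nf
  simp [Complex.ext_iff]
  ring_nf

lemma proj_eq_bloch (v : Fin 2 → ℂ) (hv : dotProduct (star v) v = 1) :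
    proj v = bloch (bvec v) := by
  have h : Complex.normSq (v 0) + Complex.normSq (v 1) = 1 := by
    have := congrArg Complex.re hv
    simpa [dotProduct, Fin.sum_univ_two, Complex.normSq, mul_comm] using this
  ext i j
  fin_cases i <;> fin_cases j <;>
    simp [proj, bloch, bvec, Matrix.vecMulVec, Complex.ext_iff, Complex.normSq] at * <;>
    constructor <;> ring_nf <;> nlinarith [h]

lemma key_ineq {p0 p1 p2 a b c d : ℝ} (h : p0^2 + p1^2 + p2^2 ≤ 1) :
    0 ≤ (1+p2)/2*(a^2+b^2) + (1-p2)/2*(c^2+d^2) + p0*(a*c+b*d) + p1*(a*d-b*c) := by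
  set S := a^2+b^2+c^2+d^2 with hS
  set u0 := 2*(a*c+b*d) with hu0
  set u1 := 2*(a*d-b*c) with hu1
  set u2 := a^2+b^2-c^2-d^2 with hu2
  have hu : u0^2 + u1^2 + u2^2 = S^2 := by simp only [hS]; ring
  have hcs : (p0*u0 + p1*u1 + p2*u2)^2 ≤ S^2 := by
    have l : (p0*u0 + p1*u1 + p2*u2)^2 ≤ (p0^2+p1^2+p2^2) * (u0^2+u1^2+u2^2) := by
      nlinarith [sq_nonneg (p0*u1 - p1*u0), sq_nonneg (p0*u2 - p2*u0), sq_nonneg (p1*u2 - p2*u1)]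
    nlinarith [sq_nonneg S, hu]
  have hS0 : 0 ≤ S := by positivity
  have key : 0 ≤ S + (p0*u0 + p1*u1 + p2*u2) := by nlinarith [hcs, hS0]
  rw [hS, hu0, hu1, hu2] at key
  linarith

lemma bloch_isHermitian (p : Fin 3 → ℝ) : (bloch p).IsHermitian := by
  ext i j
  fin_cases i <;> fin_cases j <;>
    simp [bloch, Matrix.conjTranspose_apply, Complex.ext_iff]

lemma qre (p : Fin 3 → ℝ) (x : Fin 2 → ℂ) :
    (dotProduct (star x) ((bloch p) *ᵥ x)).re =
      (1 + p 2)/2*((x 0).re^2+(x 0).im^2) + (1 - p 2)/2*((x 1).re^2+(x 1).im^2)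
      + p 0*((x 0).re*(x 1).re+(x 0).im*(x 1).im)
      + p 1*((x 0).re*(x 1).im-(x 0).im*(x 1).re) := by
  simp [bloch, dotProduct, Matrix.mulVec, Fin.sum_univ_two]
  ring

lemma bloch_posSemidef {p : Fin 3 → ℝ} (h : ∑ i, p i ^ 2 ≤ 1) :
    (bloch p).PosSemidef := by
  refine posSemidef_iff_dotProduct_mulVec.mpr ⟨bloch_isHermitian p, fun x => ?_⟩
  rw [Complex.le_def]
  rw [Fin.sum_univ_three] at h
  have him : (dotProduct (star x) ((bloch p) *ᵥ x)).im = 0 := by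
    simp [bloch, dotProduct, Matrix.mulVec, Fin.sum_univ_two]
    ring
  exact ⟨by rw [Complex.zero_re, qre]; exact key_ineq h, by rw [Complex.zero_im, him]⟩

lemma exists_bloch {ρ : Matrix (Fin 2) (Fin 2) ℂ} (hpsd : ρ.PosSemidef)
    (htr : ρ.trace = 1) : ∃ p : Fin 3 → ℝ, ρ = bloch p ∧ ∑ i, p i ^ 2 ≤ 1 := by
  obtain ⟨hherm, hq⟩ := posSemidef_iff_dotProduct_mulVec.mp hpsd
  have h00 := hherm.apply 0 0
  have h11 := hherm.apply 1 1
  have h01 := hherm.apply 1 0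
  have h00im : (ρ 0 0).im = 0 := by
    have := congrArg Complex.im h00; simp at this; linarith
  have h11im : (ρ 1 1).im = 0 := by
    have := congrArg Complex.im h11; simp at this; linarith
  have htrre : (ρ 0 0).re + (ρ 1 1).re = 1 := by
    have := congrArg Complex.re htr
    simpa [Matrix.trace, Fin.sum_univ_two] using this
  set p : Fin 3 → ℝ := ![2 * (ρ 1 0).re, 2 * (ρ 1 0).im, (ρ 0 0).re - (ρ 1 1).re] with hp
  have hρ : ρ = bloch p := by
    ext i j
    fin_cases i <;> fin_cases j
    · show ρ 0 0 = _
      simp [bloch, hp, Complex.ext_iff, h00im]; ring_nf; linarith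
    · show ρ 0 1 = _
      have h01' : ρ 0 1 = star (ρ 1 0) := by rw [← h01, star_star]
      rw [h01']
      simp [bloch, hp, Complex.ext_iff]
      ring
    · show ρ 1 0 = _
      simp [bloch, hp, Complex.ext_iff]
    · show ρ 1 1 = _
      simp [bloch, hp, Complex.ext_iff, h11im]; ring_nf; linarith
  refine ⟨p, hρ, ?_⟩
  rw [hρ] at hq
  have hA := (Complex.le_def.mp (hq ![1, 0])).1
  rw [qre] at hA
  have hB := (Complex.le_def.mp (hq ![0, 1])).1
  rw [qre] at hB
  simp at hA hB
  set m : ℝ := p 0 ^ 2 + p 1 ^ 2 with hm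
  have hC := (Complex.le_def.mp (hq ![((p 0 : ℂ) - (p 1 : ℝ) * Complex.I) * ((1 : ℝ) - (p 2 : ℝ)), (-m : ℝ)])).1
  rw [qre] at hC
  simp [Complex.mul_re, Complex.mul_im] at hC
  have hE := (Complex.le_def.mp (hq ![((p 0 : ℂ) - (p 1 : ℝ) * Complex.I), (-2 : ℝ)])).1
  rw [qre] at hE
  simp at hE
  rw [Fin.sum_univ_three]
  have hm0 : 0 ≤ m := by positivity
  rcases eq_or_lt_of_le hB with h1 | h1
  · have hp2 : p 2 = 1 := by linarith
    rw [hp2] at hE ⊢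
    nlinarith [hE, hm0]
  · rcases eq_or_lt_of_le hm0 with h2 | h2
    · nlinarith [hA, hB]
    · have h1' : 0 < 1 - p 2 := by linarith
      simp only [hm] at hC
      have hD : 0 ≤ (1 - p 2) * (p 0 ^ 2 + p 1 ^ 2) * (1 - p 2 ^ 2 - (p 0 ^ 2 + p 1 ^ 2)) := by
        nlinarith [hC]
      rw [← hm] at hD
      by_contra hcon
      push_neg at hcon
      have hpos : 0 < (1 - p 2) * m * (m + p 2 ^ 2 - 1) :=
        mul_pos (mul_pos h1' h2) (by rw [hm]; linarith)
      nlinarith [hD, hpos]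

/-- Completeness of a two-element orthonormal system in `ℂ²`. -/
lemma proj_add_proj (M : Meas 2) : proj (M.vec 0) + proj (M.vec 1) = 1 := by
  classical
  set B : Matrix (Fin 2) (Fin 2) ℂ := Matrix.of (fun i j => M.vec j i) with hB
  have h1 : Bᴴ * B = 1 := by
    ext i j
    have := M.ortho i j
    simp [dotProduct, Fin.sum_univ_two] at this
    fin_cases i <;> fin_cases j <;>
      simp [Matrix.mul_apply, Matrix.conjTranspose_apply, Fin.sum_univ_two, hB,
        Matrix.one_apply] <;>
      simpa using this
  have h2 : B * Bᴴ = 1 := mul_eq_one_comm.mp h1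
  calc proj (M.vec 0) + proj (M.vec 1) = B * Bᴴ := by
        ext i j
        simp [proj, Matrix.vecMulVec, Matrix.mul_apply, Matrix.conjTranspose_apply,
          Fin.sum_univ_two, hB, mul_comm]
    _ = 1 := h2

lemma meas_unit (M : Meas 2) (i : Fin 2) :
    dotProduct (star (M.vec i)) (M.vec i) = 1 := by
  simpa using M.ortho i i

lemma meas_prob_add (M : Meas 2) : M.prob 0 + M.prob 1 = 1 := by
  simpa [Fin.sum_univ_two] using M.prob_sum

/-- Sufficient condition for consistency in terms of a Bloch point. -/
lemma consistentOn_of_point {m : ℕ} (F : Fin m → Meas 2) (G : Finset (Fin m))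
    (p : Fin 3 → ℝ) (hball : ∑ i, p i ^ 2 ≤ 1)
    (hplane : ∀ k ∈ G, ∑ i, p i * bvec ((F k).vec 0) i = 2 * (F k).prob 0 - 1) :
    ConsistentOn F G := by
  refine ⟨bloch p, bloch_posSemidef hball, bloch_trace p, fun k hk i => ?_⟩
  have h0 : (bloch p * proj ((F k).vec 0)).trace = ((F k).prob 0 : ℂ) := by
    rw [proj_eq_bloch _ (meas_unit (F k) 0), trace_bloch_mul, hplane k hk]
    push_cast
    ring
  fin_cases i
  · exact h0
  · have hc : proj ((F k).vec 1) = 1 - proj ((F k).vec 0) :=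
      eq_sub_of_add_eq' (proj_add_proj (F k))
    rw [show ((⟨1, by norm_num⟩ : Fin 2)) = (1 : Fin 2) from rfl, hc, mul_sub, mul_one,
      Matrix.trace_sub, bloch_trace, h0]
    have hps := meas_prob_add (F k)
    have : (F k).prob 1 = 1 - (F k).prob 0 := by linarith
    rw [this]
    push_cast
    ring

/-- Necessary condition: a consistent family gives a Bloch point. -/
lemma point_of_consistentOn {m : ℕ} {F : Fin m → Meas 2} {G : Finset (Fin m)}
    (h : ConsistentOn F G) :
    ∃ p : Fin 3 → ℝ, ∑ i, p i ^ 2 ≤ 1 ∧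
      ∀ k ∈ G, ∑ i, p i * bvec ((F k).vec 0) i = 2 * (F k).prob 0 - 1 := by
  obtain ⟨ρ, hpsd, htr, hcond⟩ := h
  obtain ⟨p, rfl, hball⟩ := exists_bloch hpsd htr
  refine ⟨p, hball, fun k hk => ?_⟩
  have := hcond k hk 0
  rw [proj_eq_bloch _ (meas_unit (F k) 0), trace_bloch_mul] at this
  have h' : (1 + ∑ i, p i * bvec ((F k).vec 0) i)/2 = (F k).prob 0 :=
    Complex.ofReal_inj.mp this
  linarith

lemma consistentOn_mono {m : ℕ} {F : Fin m → Meas 2} {G H : Finset (Fin m)}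
    (hGH : G ⊆ H) (h : ConsistentOn F H) : ConsistentOn F G := by
  obtain ⟨ρ, h1, h2, h3⟩ := h
  exact ⟨ρ, h1, h2, fun k hk => h3 k (hGH hk)⟩

/-- Helly-type upper bound: 4-wise consistency implies consistency. -/
lemma consistent_of_four {m : ℕ} (F : Fin m → Meas 2)
    (h : ∀ G : Finset (Fin m), G.card ≤ 4 → ConsistentOn F G) :
    ConsistentOn F Finset.univ := by
  classical
  rcases Nat.eq_zero_or_pos m with hm | hm
  · exact h Finset.univ (by simp [hm])
  set T : Fin m → Set (EuclideanSpace ℝ (Fin 3)) := fun k =>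
    {p : EuclideanSpace ℝ (Fin 3) | (∑ i, p i ^ 2 ≤ 1) ∧
      ∑ i, p i * bvec ((F k).vec 0) i = 2 * (F k).prob 0 - 1} with hT
  have hnorm : ∀ p : EuclideanSpace ℝ (Fin 3), ‖p‖ ≤ 1 ↔ ∑ i, p i ^ 2 ≤ 1 := by
    intro p
    rw [EuclideanSpace.norm_eq]
    have hs : ∑ i, ‖p i‖ ^ 2 = ∑ i, p i ^ 2 := by
      simp [Real.norm_eq_abs, sq_abs]
    rw [hs]
    constructor
    · intro hle
      have := Real.sq_sqrt (by positivity : (0:ℝ) ≤ ∑ i, p i ^ 2)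
      nlinarith [Real.sqrt_nonneg (∑ i, p i ^ 2)]
    · intro hle
      calc Real.sqrt (∑ i, p i ^ 2) ≤ Real.sqrt 1 := Real.sqrt_le_sqrt hle
        _ = 1 := Real.sqrt_one
  have hconv : ∀ k, Convex ℝ (T k) := by
    intro k
    have heq : T k = Metric.closedBall (0 : EuclideanSpace ℝ (Fin 3)) 1 ∩
        {p : EuclideanSpace ℝ (Fin 3) |
          ∑ i, p i * bvec ((F k).vec 0) i = 2 * (F k).prob 0 - 1} := by
      ext q
      simp only [hT, Set.mem_setOf_eq, Set.mem_inter_iff, Metric.mem_closedBall,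
        dist_zero_right, hnorm q]
      try tauto
    rw [heq]
    refine (convex_closedBall _ _).inter (convex_hyperplane ?_ _)
    constructor
    · intro x y
      rw [← Finset.sum_add_distrib]
      refine Finset.sum_congr rfl fun i _ => ?_
      rw [PiLp.add_apply]
      ring
    · intro c x
      simp only [smul_eq_mul]
      rw [Finset.mul_sum]
      refine Finset.sum_congr rfl fun i _ => ?_
      rw [PiLp.smul_apply, smul_eq_mul]
      ring
  have hint : (⋂ k ∈ (Finset.univ : Finset (Fin m)), T k).Nonempty := by
    apply Convex.helly_theorem' (𝕜 := ℝ) (fun k _ => hconv k)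
    intro I _ hIcard
    rw [finrank_euclideanSpace_fin] at hIcard
    obtain ⟨p, hball, hplane⟩ := point_of_consistentOn (h I hIcard)
    refine ⟨(WithLp.equiv 2 (Fin 3 → ℝ)).symm p, ?_⟩
    rw [Set.mem_iInter₂]
    intro k hk
    constructor
    · simpa [hT, WithLp.equiv_symm_apply, PiLp.toLp_apply] using hball
    · simpa [hT, WithLp.equiv_symm_apply, PiLp.toLp_apply] using hplane k hk
  obtain ⟨q, hq⟩ := hint
  rw [Set.mem_iInter₂] at hq
  have k0 : Fin m := ⟨0, hm⟩
  exact consistentOn_of_point F Finset.univ (fun i => q i)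
    (hq k0 (by simp)).1 (fun k _ => (hq k (by simp)).2)

/-! ### The counterexample family on `ℂ²` -/

noncomputable def M0 : Meas 2 where
  vec := ![![1, 0], ![0, 1]]
  ortho := by
    intro i j
    fin_cases i <;> fin_cases j <;>
      simp [dotProduct, Fin.sum_univ_two, Complex.ext_iff] <;>
      norm_num [Complex.div_re, Complex.div_im, Complex.normSq]
  prob := ![1/2, 1/2]
  prob_nonneg := by intro i; fin_cases i <;> norm_num
  prob_sum := by norm_num [Fin.sum_univ_two]

noncomputable def M1 : Meas 2 where
  vec := ![![(1+Complex.I)/2, (1+Complex.I)/2], ![(1+Complex.I)/2, -(1+Complex.I)/2]]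
  ortho := by
    intro i j
    fin_cases i <;> fin_cases j <;>
      simp [dotProduct, Fin.sum_univ_two, Complex.ext_iff] <;>
      norm_num [Complex.div_re, Complex.div_im, Complex.normSq]
  prob := ![1/2, 1/2]
  prob_nonneg := by intro i; fin_cases i <;> norm_num
  prob_sum := by norm_num [Fin.sum_univ_two]

noncomputable def M2 : Meas 2 where
  vec := ![![(1+Complex.I)/2, (1-Complex.I)/2], ![(1+Complex.I)/2, -(1-Complex.I)/2]]
  ortho := by
    intro i j
    fin_cases i <;> fin_cases j <;>
      simp [dotProduct, Fin.sum_univ_two, Complex.ext_iff] <;>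
      norm_num [Complex.div_re, Complex.div_im, Complex.normSq]
  prob := ![1/2, 1/2]
  prob_nonneg := by intro i; fin_cases i <;> norm_num
  prob_sum := by norm_num [Fin.sum_univ_two]

noncomputable def M3 : Meas 2 where
  vec := ![![(1+2*Complex.I)/3, 2/3], ![-2/3, (1-2*Complex.I)/3]]
  ortho := by
    intro i j
    fin_cases i <;> fin_cases j <;>
      simp [dotProduct, Fin.sum_univ_two, Complex.ext_iff] <;>
      norm_num [Complex.div_re, Complex.div_im, Complex.normSq]
  prob := ![19/36, 17/36]
  prob_nonneg := by intro i; fin_cases i <;> norm_num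
  prob_sum := by norm_num [Fin.sum_univ_two]

noncomputable def CF : Fin 4 → Meas 2 := ![M0, M1, M2, M3]

lemma hbv0 : bvec (![1, 0] : Fin 2 → ℂ) = ![0, 0, 1] := by
  funext i
  fin_cases i <;>
    norm_num [bvec, M0, Complex.div_re, Complex.div_im, Complex.normSq, Complex.ext_iff]

lemma hbv1 : bvec (![(1+Complex.I)/2, (1+Complex.I)/2] : Fin 2 → ℂ) = ![1, 0, 0] := by
  funext i
  fin_cases i <;>
    norm_num [bvec, M1, Complex.div_re, Complex.div_im, Complex.normSq, Complex.ext_iff]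

lemma hbv2 : bvec (![(1+Complex.I)/2, (1-Complex.I)/2] : Fin 2 → ℂ) = ![0, -1, 0] := by
  funext i
  fin_cases i <;>
    norm_num [bvec, M2, Complex.div_re, Complex.div_im, Complex.normSq, Complex.ext_iff]

lemma hbv3 : bvec (![(1+2*Complex.I)/3, 2/3] : Fin 2 → ℂ) = ![4/9, -8/9, 1/9] := by
  funext i
  fin_cases i <;>
    norm_num [bvec, M3, Complex.div_re, Complex.div_im, Complex.normSq, Complex.ext_iff]

lemma CF_triples : ∀ G : Finset (Fin 4), G.card = 3 → ConsistentOn CF G := by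
  have henum : ∀ G : Finset (Fin 4), G.card = 3 →
      G = {0,1,2} ∨ G = {0,1,3} ∨ G = {0,2,3} ∨ G = {1,2,3} := by decide
  intro G hG
  rcases henum G hG with rfl | rfl | rfl | rfl
  · refine consistentOn_of_point CF _ ![0, 0, 0] (by norm_num [Fin.sum_univ_three, Matrix.cons_val_two, Matrix.cons_val_three, Matrix.tail_cons, Matrix.head_cons]) ?_
    intro k hk
    fin_cases hk <;>
      norm_num [CF, hbv0, hbv1, hbv2, hbv3, M0, M1, M2, M3, Fin.sum_univ_three, Matrix.cons_val_two, Matrix.cons_val_three, Matrix.tail_cons, Matrix.head_cons]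
  · refine consistentOn_of_point CF _ ![0, -1/16, 0] (by norm_num [Fin.sum_univ_three, Matrix.cons_val_two, Matrix.cons_val_three, Matrix.tail_cons, Matrix.head_cons]) ?_
    intro k hk
    fin_cases hk <;>
      norm_num [CF, hbv0, hbv1, hbv2, hbv3, M0, M1, M2, M3, Fin.sum_univ_three, Matrix.cons_val_two, Matrix.cons_val_three, Matrix.tail_cons, Matrix.head_cons]
  · refine consistentOn_of_point CF _ ![1/8, 0, 0] (by norm_num [Fin.sum_univ_three, Matrix.cons_val_two, Matrix.cons_val_three, Matrix.tail_cons, Matrix.head_cons]) ?_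
    intro k hk
    fin_cases hk <;>
      norm_num [CF, hbv0, hbv1, hbv2, hbv3, M0, M1, M2, M3, Fin.sum_univ_three, Matrix.cons_val_two, Matrix.cons_val_three, Matrix.tail_cons, Matrix.head_cons]
  · refine consistentOn_of_point CF _ ![0, 0, 1/2] (by norm_num [Fin.sum_univ_three, Matrix.cons_val_two, Matrix.cons_val_three, Matrix.tail_cons, Matrix.head_cons]) ?_
    intro k hk
    fin_cases hk <;>
      norm_num [CF, hbv0, hbv1, hbv2, hbv3, M0, M1, M2, M3, Fin.sum_univ_three, Matrix.cons_val_two, Matrix.cons_val_three, Matrix.tail_cons, Matrix.head_cons]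

lemma CF_not_consistent : ¬ ConsistentOn CF Finset.univ := by
  intro hcon
  obtain ⟨p, hball, hpl⟩ := point_of_consistentOn hcon
  have e0 := hpl 0 (Finset.mem_univ _)
  have e1 := hpl 1 (Finset.mem_univ _)
  have e2 := hpl 2 (Finset.mem_univ _)
  have e3 := hpl 3 (Finset.mem_univ _)
  norm_num [CF, hbv0, hbv1, hbv2, hbv3, M0, M1, M2, M3, Fin.sum_univ_three, Matrix.cons_val_two, Matrix.cons_val_three, Matrix.tail_cons, Matrix.head_cons] at e0 e1 e2 e3
  rw [e0, e1, e2] at e3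
  norm_num at e3

/-- There is a quantum probability assignment on `ℂ²` of size `4` such that every
subset of size `3` is consistent while the whole family is not; consequently the
consistency number of a `2`-dimensional quantum system — the least `r` such that
consistency of all subsets of size (at most) `r` of any QPA implies consistency of
the whole QPA — equals `4`. -/
theorem consistency_number_eq_dim_two :
    (∃ F : Fin 4 → Meas 2,
      (∀ G : Finset (Fin 4), G.card = 3 → ConsistentOn F G) ∧
      ¬ ConsistentOn F Finset.univ) ∧
    IsLeast {r : ℕ | ∀ (m : ℕ) (F : Fin m → Meas 2),
        (∀ G : Finset (Fin m), G.card ≤ r → ConsistentOn F G) →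
          ConsistentOn F Finset.univ}
      4 := by
  refine ⟨⟨CF, CF_triples, CF_not_consistent⟩, ?_, ?_⟩
  · intro m F h
    exact consistent_of_four F h
  · intro r hr
    by_contra hlt
    push_neg at hlt
    have hr3 : r ≤ 3 := by omega
    apply CF_not_consistent
    apply hr 4 CF
    intro G hG
    have hG3 : G.card ≤ 3 := le_trans hG hr3
    obtain ⟨H, hGH, _, hH⟩ := Finset.exists_subsuperset_card_eq (Finset.subset_univ G) hG3
      (by simp)
    exact consistentOn_mono hGH (CF_triples H hH)
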